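/- For a string X, let N_T(X) denote the number of rotations of T that are lexicographically smaller than X. Let W ∈ [1..σ]^m be a maximal repeat of T and let k ∈ [1..m] be such that W[i..m] is not left-maximal in T for every i ∈ [2..k]. Then for every character c ∈ [0..σ] and every i ∈ [1..k], N_T(W[i..m]c) − N_T(W[i..m]) = N_T(Wc) − N_T(W). Equivalently, writing [p_i..q_i] for the lexicographic interval of W[i..m] among the sorted rotations of T and [x_i..y_i] for that of W[i..m]c, one has x_i = p_i + x_1 − p_1 and y_i = p_i + y_1 − p_1 for all i ∈ [1..k]. -/

import Mathlib

/-! Basic definitions: strings are lists of naturals; the separator `#` is `0`;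
the alphabet is `Σ = [1..σ]`. Occurrences are taken in the circular version of `T`. -/

noncomputable section
open Classical

/-- `T` is a string over the alphabet `[1..σ]` followed by the separator `# = 0`
(so `#` occurs in `T` exactly once, at the last position). -/
def Wellformed (σ : ℕ) (T : List ℕ) : Prop :=
  ∃ S : List ℕ, T = S ++ [0] ∧ ∀ c ∈ S, 1 ≤ c ∧ c ≤ σ

/-- The rotation of `T` starting at position `i`. -/
def rot (T : List ℕ) (i : ℕ) : List ℕ := T.drop i ++ T.take i

/-- `W` occurs at position `i` of the circular version of `T`. -/
def CircOccAt (T W : List ℕ) (i : ℕ) : Prop :=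
  ∀ j < W.length, W.getD j 0 = T.getD ((i + j) % T.length) 0

/-- `𝒫_T(W)`: the set of starting positions of occurrences of `W` in the circular
version of `T`. -/
def Pset (T W : List ℕ) : Finset ℕ :=
  (Finset.range T.length).filter (fun i => CircOccAt T W i)

/-- `W` occurs in the circular version of `T`. -/
def OccursCirc (T W : List ℕ) : Prop := (Pset T W).Nonempty

/-- `Σ^ℓ_T(W)`: the set of characters `a` such that `aW` occurs in circular `T`. -/
def SigmaL (T W : List ℕ) : Finset ℕ :=
  T.toFinset.filter (fun a => OccursCirc T (a :: W))

/-- `Σ^r_T(W)`: the set of characters `b` such that `Wb` occurs in circular `T`. -/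
def SigmaR (T W : List ℕ) : Finset ℕ :=
  T.toFinset.filter (fun b => OccursCirc T (W ++ [b]))

/-- `W` is left-maximal in `T`. -/
def LeftMaximal (T W : List ℕ) : Prop := 1 < (SigmaL T W).card

/-- `W` is right-maximal in `T`. -/
def RightMaximal (T W : List ℕ) : Prop := 1 < (SigmaR T W).card

/-- The (finite) collection of substrings of the circular version of `T`. -/
def circSubstrings (T : List ℕ) : Finset (List ℕ) :=
  ((Finset.range T.length) ×ˢ (Finset.range (T.length + 1))).image
    (fun p => (rot T p.1).take p.2)

/-- `ℳ_T`: the set of nonempty maximal repeats of `T`, i.e. repeats that are both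
left-maximal and right-maximal.  (Every maximal repeat occurs in circular `T` and has
length at most `|T|`, so it belongs to `circSubstrings T`.) -/
def MaxRepeats (T : List ℕ) : Finset (List ℕ) :=
  (circSubstrings T).filter
    (fun W => W ≠ [] ∧ 1 < (Pset T W).card ∧ LeftMaximal T W ∧ RightMaximal T W)

/-- Strict lexicographic comparison of strings (a proper prefix is smaller). -/
def lexLt : List ℕ → List ℕ → Bool
  | [], [] => false
  | [], _ :: _ => true
  | _ :: _, [] => false
  | a :: A, b :: B => decide (a < b) || (a == b && lexLt A B)

/-- Non-strict lexicographic comparison. -/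
def lexLe (A B : List ℕ) : Bool := !(lexLt B A)

/-- The Burrows–Wheeler transform of `T`: the `i`-th character of `BWT T` is the last
character of the lexicographically `i`-th rotation of `T`. -/
def BWT (T : List ℕ) : List ℕ :=
  (((List.range T.length).map (rot T)).mergeSort lexLe).map (fun R => R.getLast!)

/-- The number of runs of a string, i.e. the number of maximal intervals on which all
characters are equal. -/
def numRuns : List ℕ → ℕ
  | [] => 0
  | [_] => 1
  | a :: b :: l => (if a = b then 0 else 1) + numRuns (b :: l)


noncomputable section
open Classical

/-- `ℳ^r_T`: the set of rightmost maximal repeats of `T`: maximal repeats `W` such that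
no string `WV` with `V` nonempty is left-maximal in `T`. -/
def RightmostMaxRepeats (T : List ℕ) : Finset (List ℕ) :=
  (MaxRepeats T).filter (fun W => ∀ V : List ℕ, V ≠ [] → ¬ LeftMaximal T (W ++ V))

/-- `Y` is the shortest right-maximal extension of `X` in `T`: the shortest
right-maximal string of `T` having `X` as a prefix. -/
def ShortestRightMaxExt (T X Y : List ℕ) : Prop :=
  X <+: Y ∧ RightMaximal T Y ∧
    ∀ Z : List ℕ, X <+: Z → RightMaximal T Z → Y.length ≤ Z.length

/-- `ℱ^r_T`: pairs `(V, b)` with `V ∈ ℳ_T ∪ {ε}` and `b ∈ Σ^r_T(V)` such that either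
`Vb` occurs exactly once in circular `T`, or the shortest right-maximal extension of
`Vb` is not a maximal repeat of `T`.  These pairs correspond to the suffix-tree edges
of `T` from maximal-repeat nodes to non-maximal-repeat nodes. -/
def Fr (T : List ℕ) : Finset (List ℕ × ℕ) :=
  ((insert ([] : List ℕ) (MaxRepeats T)) ×ˢ T.toFinset).filter
    (fun p => p.2 ∈ SigmaR T p.1 ∧
      ((Pset T (p.1 ++ [p.2])).card = 1 ∨
        ∀ Y : List ℕ, ShortestRightMaxExt T (p.1 ++ [p.2]) Y → Y ∉ MaxRepeats T))

/-- `e_T`: the number of right extensions of maximal repeats of `T`, i.e. the number of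
pairs `(V, b)` with `V ∈ ℳ_T ∪ {ε}` and `b ∈ Σ^r_T(V)`.  This equals the number of
arcs of the CDAWG of `T`. -/
def eCount (T : List ℕ) : ℕ :=
  ∑ V ∈ insert ([] : List ℕ) (MaxRepeats T), (SigmaR T V).card

/-- The next LZ77 factor, to be placed at position `k` of `T`, may be `F` if `F` is a
single character (every single character of `T` has a source among the `σ+1` distinct
characters virtually preceding `T`), or if `F` has an occurrence in `T` starting at a
position `j` strictly before `k`. -/
def LZsource (T : List ℕ) (k : ℕ) (F : List ℕ) : Prop :=
  F.length = 1 ∨ ∃ j, j < k ∧ F <+: T.drop j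

/-- `fs` is the LZ77 factorization of `T` (greedy: each factor is the longest prefix of
the remaining suffix admitting a source). -/
def IsLZ77 (T : List ℕ) (fs : List (List ℕ)) : Prop :=
  fs.flatten = T ∧ (∀ F ∈ fs, F ≠ []) ∧
    ∀ i, (h : i < fs.length) →
      LZsource T ((fs.take i).flatten).length (fs.get ⟨i, h⟩) ∧
      ∀ F' : List ℕ, F' <+: T.drop ((fs.take i).flatten).length →
        (fs.get ⟨i, h⟩).length < F'.length →
          ¬ LZsource T ((fs.take i).flatten).length F'

/-- `N_T(X)`: the number of rotations of `T` lexicographically smaller than `X`. -/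
def Nrank (T X : List ℕ) : ℕ :=
  ((List.range T.length).filter (fun i => lexLt (rot T i) X)).length

/-- The string `a b a² b a³ b ⋯ aˣ b #`. -/
def Tx (a b x : ℕ) : List ℕ :=
  (((List.range x).map (fun i => List.replicate (i + 1) a ++ [b])).flatten) ++ [0]

end
section Lemmas

lemma rot_length (T : List ℕ) (i : ℕ) : (rot T i).length = T.length := by
  simp [rot]; omega

lemma rot_getD (T : List ℕ) (i j : ℕ) (hi : i < T.length) (hj : j < T.length) :
    (rot T i).getD j 0 = T.getD ((i + j) % T.length) 0 := by
  unfold rot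
  by_cases h : j < T.length - i
  · rw [List.getD_append _ _ _ _ (by simpa using h)]
    rw [Nat.mod_eq_of_lt (by omega)]
    rw [List.getD_eq_getElem?_getD, List.getD_eq_getElem?_getD, List.getElem?_drop]
  · rw [List.getD_append_right _ _ _ _ (by simpa using h)]
    have h2 : (i + j) % T.length = i + j - T.length := by
      rw [Nat.mod_eq_sub_mod (by omega), Nat.mod_eq_of_lt (by omega)]
    rw [h2, List.getD_eq_getElem?_getD, List.getD_eq_getElem?_getD]
    rw [List.getElem?_take_of_lt (by simp; omega)]
    congr 2
    simp
    omega

lemma prefix_iff_getD {X R : List ℕ} (h : X.length ≤ R.length) :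
    X <+: R ↔ ∀ j < X.length, X.getD j 0 = R.getD j 0 := by
  constructor
  · rintro ⟨t, rfl⟩ j hj
    rw [List.getD_append _ _ _ _ hj]
  · intro hj
    rw [List.prefix_iff_eq_take]
    apply List.ext_getElem (by simp [h])
    intro n h1 h2
    have := hj n h1
    rw [List.getD_eq_getElem?_getD, List.getD_eq_getElem?_getD] at this
    simp at h2
    rw [List.getElem?_eq_getElem h1, List.getElem?_eq_getElem (show n < R.length by omega)] at this
    simpa [h2.1] using this

end Lemmas
section Lemmas2

lemma circOcc_iff_prefix {T X : List ℕ} {i : ℕ} (hi : i < T.length) (hX : X.length ≤ T.length) :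
    CircOccAt T X i ↔ X <+: rot T i := by
  rw [prefix_iff_getD (by rw [rot_length]; exact hX)]
  unfold CircOccAt
  constructor
  · intro h j hj
    rw [rot_getD T i j hi (by omega), ← h j hj]
  · intro h j hj
    rw [h j hj, rot_getD T i j hi (by omega)]

lemma lexLt_append_self (V rest : List ℕ) : lexLt (V ++ rest) V = false := by
  induction V with
  | nil => cases rest <;> rfl
  | cons v V ih => simp [lexLt, ih]

lemma lexLt_of_prefix {V R : List ℕ} (h : V <+: R) : lexLt R V = false := by
  obtain ⟨t, rfl⟩ := h; exact lexLt_append_self V t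

lemma lexLt_snoc_iff {V R : List ℕ} (c : ℕ) (h : V.length < R.length) :
    lexLt R (V ++ [c]) = true ↔ (lexLt R V = true ∨ ∃ d, d < c ∧ V ++ [d] <+: R) := by
  induction V generalizing R with
  | nil =>
    cases R with
    | nil => simp at h
    | cons r R' =>
      simp only [List.nil_append, lexLt]
      constructor
      · intro hh
        rcases Bool.or_eq_true_iff.mp hh with h1 | h1
        · exact Or.inr ⟨r, by simpa using h1, ⟨R', rfl⟩⟩
        · have h2 := (Bool.and_eq_true _ _).mp h1
          have : r = c := by simpa using h2.1
          subst this
          cases R' with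
          | nil => simp [lexLt] at h2
          | cons x X => simp [lexLt] at h2
      · rintro (h1 | ⟨d, hd, ⟨t, ht⟩⟩)
        · simp [lexLt] at h1
        · simp at ht
          obtain ⟨rfl, rfl⟩ := ht
          simp [hd]
  | cons v V' ih =>
    cases R with
    | nil => simp at h
    | cons r R' =>
      simp only [List.cons_append, lexLt]
      simp only [Bool.or_eq_true, decide_eq_true_eq, Bool.and_eq_true, beq_iff_eq, List.append_eq]
      rw [ih (by simpa using Nat.lt_of_succ_lt_succ h)]
      constructor
      · rintro (h1 | ⟨rfl, h2 | h2⟩)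
        · exact Or.inl (Or.inl h1)
        · exact Or.inl (Or.inr ⟨rfl, h2⟩)
        · obtain ⟨d, hd, t, ht⟩ := h2
          exact Or.inr ⟨d, hd, t, by simp [← ht]⟩
      · rintro ((h1 | ⟨rfl, h2⟩) | ⟨d, hd, t, ht⟩)
        · exact Or.inl h1
        · exact Or.inr ⟨rfl, Or.inl h2⟩
        · simp at ht
          exact Or.inr ⟨ht.1.symm, Or.inr ⟨d, hd, t, by simp [ht.2]⟩⟩

end Lemmas2
section Lemmas3

lemma circOcc_prefix {T X Y : List ℕ} {p : ℕ} (h : X <+: Y) (hY : CircOccAt T Y p) :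
    CircOccAt T X p := by
  obtain ⟨t, rfl⟩ := h
  intro j hj
  rw [← List.getD_append X t 0 j hj]
  exact hY j (by simp; omega)

lemma circOcc_drop {T X : List ℕ} {p m : ℕ} (hT : T ≠ []) (h : CircOccAt T X p) :
    CircOccAt T (X.drop m) ((p + m) % T.length) := by
  have hn : 0 < T.length := List.length_pos_iff.mpr hT
  intro j hj
  have hj' : m + j < X.length := by simp at hj; omega
  have := h (m + j) hj'
  rw [List.getD_eq_getElem?_getD, List.getElem?_drop, ← List.getD_eq_getElem?_getD, this]
  congr 1
  rw [Nat.mod_add_mod, Nat.add_assoc]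

lemma circOcc_cons {T X : List ℕ} {x : ℕ} {q : ℕ} (hT : T ≠ []) (h : CircOccAt T (x :: X) q) :
    CircOccAt T X ((q + 1) % T.length) := by
  have := circOcc_drop (m := 1) hT h
  simpa using this

lemma circOcc_extend_left {T X : List ℕ} {p : ℕ} (hT : T ≠ []) (hp : p < T.length)
    (h : CircOccAt T X p) :
    CircOccAt T ((T.getD ((p + T.length - 1) % T.length) 0) :: X) ((p + T.length - 1) % T.length) := by
  have hn : 0 < T.length := List.length_pos_iff.mpr hT
  set q := (p + T.length - 1) % T.length with hq
  have hq1 : (q + 1) % T.length = p := by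
    rw [hq, Nat.mod_add_mod, show p + T.length - 1 + 1 = p + T.length by omega,
      Nat.add_mod_right, Nat.mod_eq_of_lt hp]
  intro j hj
  cases j with
  | zero => simp [Nat.mod_eq_of_lt (show q < T.length from Nat.mod_lt _ hn)]
  | succ j' =>
    simp only [List.getD_cons_succ]
    have hj' : j' < X.length := by simpa using hj
    rw [h j' hj']
    congr 1
    rw [show q + (j' + 1) = q + 1 + j' by omega]
    conv_rhs => rw [← Nat.mod_add_mod, hq1]

lemma char_mem {T X : List ℕ} {x p : ℕ} (hp : p < T.length) (h : CircOccAt T (x :: X) p) :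
    x ∈ T.toFinset := by
  have := h 0 (by simp)
  simp only [List.getD_cons_zero] at this
  rw [Nat.add_zero, Nat.mod_eq_of_lt hp] at this
  rw [List.mem_toFinset, this, List.getD_eq_getElem?_getD, List.getElem?_eq_getElem hp]
  exact List.getElem_mem hp

end Lemmas3
section Lemmas4

lemma mod_pred_succ {n p : ℕ} (hp : p < n) : ((p + n - 1) % n + 1) % n = p := by
  rw [Nat.mod_add_mod, show p + n - 1 + 1 = p + n by omega, Nat.add_mod_right,
    Nat.mod_eq_of_lt hp]

lemma succ_mod_inj {n s q : ℕ} (hs : s < n) (hq : q < n) (h : (s + 1) % n = (q + 1) % n) :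
    s = q := by
  by_cases h1 : s + 1 = n
  · rw [h1, Nat.mod_self] at h
    by_cases h2 : q + 1 = n
    · omega
    · rw [Nat.mod_eq_of_lt (by omega)] at h; omega
  · rw [Nat.mod_eq_of_lt (by omega)] at h
    by_cases h2 : q + 1 = n
    · rw [h2, Nat.mod_self] at h; omega
    · rw [Nat.mod_eq_of_lt (by omega)] at h; omega

lemma mem_Pset {T X : List ℕ} {p : ℕ} : p ∈ Pset T X ↔ p < T.length ∧ CircOccAt T X p := by
  simp [Pset]

lemma step_card {T V : List ℕ} {a d : ℕ} (hT : T ≠ []) (hnl : ¬ LeftMaximal T V)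
    (hocc : OccursCirc T (a :: V)) :
    (Pset T (a :: (V ++ [d]))).card = (Pset T (V ++ [d])).card := by
  have hn : 0 < T.length := List.length_pos_iff.mpr hT
  have haS : a ∈ SigmaL T V := by
    obtain ⟨p', hp'⟩ := hocc
    rw [mem_Pset] at hp'
    exact Finset.mem_filter.mpr ⟨char_mem hp'.1 hp'.2, ⟨p', mem_Pset.mpr hp'⟩⟩
  have hcard : (SigmaL T V).card ≤ 1 := by
    unfold LeftMaximal at hnl; omega
  -- every occurrence of V ++ [d] is preceded by a
  have key : ∀ p, p < T.length → CircOccAt T (V ++ [d]) p →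
      CircOccAt T (a :: (V ++ [d])) ((p + T.length - 1) % T.length) := by
    intro p hp hcirc
    have hq : (p + T.length - 1) % T.length < T.length := Nat.mod_lt _ hn
    have hext := circOcc_extend_left hT hp hcirc
    set e := T.getD ((p + T.length - 1) % T.length) 0 with he
    have heV : CircOccAt T (e :: V) ((p + T.length - 1) % T.length) :=
      circOcc_prefix (by simp) hext
    have heS : e ∈ SigmaL T V :=
      Finset.mem_filter.mpr ⟨char_mem hq heV,
        ⟨_, mem_Pset.mpr ⟨hq, heV⟩⟩⟩
    have : e = a := Finset.card_le_one.mp hcard _ heS _ haS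
    rwa [this] at hext
  symm
  apply Finset.card_bij (fun p _ => (p + T.length - 1) % T.length)
  · intro p hp
    rw [mem_Pset] at hp ⊢
    exact ⟨Nat.mod_lt _ hn, key p hp.1 hp.2⟩
  · intro p1 h1 p2 h2 h
    rw [mem_Pset] at h1 h2
    have e1 := mod_pred_succ (n := T.length) h1.1
    have e2 := mod_pred_succ (n := T.length) h2.1
    rw [h] at e1
    rw [e2] at e1
    exact e1.symm
  · intro q hq
    rw [mem_Pset] at hq
    refine ⟨(q + 1) % T.length, mem_Pset.mpr ⟨Nat.mod_lt _ hn, circOcc_cons hT hq.2⟩, ?_⟩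
    apply succ_mod_inj (n := T.length) (Nat.mod_lt _ hn) hq.1
    rw [mod_pred_succ (Nat.mod_lt _ hn)]

end Lemmas4
section Lemmas5

lemma Nrank_eq_card (T X : List ℕ) :
    Nrank T X = ((Finset.range T.length).filter (fun i => lexLt (rot T i) X = true)).card := by
  rw [Nrank]
  induction T.length with
  | zero => rfl
  | succ n ih =>
      rw [List.range_succ, Finset.range_add_one, List.filter_append, List.length_append, ih]
      by_cases h : lexLt (rot T n) X = true
      · rw [Finset.filter_insert, if_pos h, Finset.card_insert_of_notMem (by simp),
          List.filter_cons]
        simp [h, Nat.add_comm]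
      · rw [Finset.filter_insert, if_neg h, List.filter_cons]
        simp [h]

lemma snoc_prefix_getD {V R : List ℕ} {d : ℕ} (h : V ++ [d] <+: R) :
    R.getD V.length 0 = d := by
  obtain ⟨t, ht⟩ := h
  rw [← ht, List.getD_append _ _ _ _ (by simp), List.getD_append_right _ _ _ _ (le_refl _)]
  simp

lemma Nrank_snoc {T V : List ℕ} (c : ℕ) (hV : V.length < T.length) :
    Nrank T (V ++ [c]) = Nrank T V + ∑ d ∈ Finset.range c, (Pset T (V ++ [d])).card := by
  have hn : 0 < T.length := by omega
  rw [Nrank_eq_card, Nrank_eq_card]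
  have hPset : ∀ d (i : ℕ), i ∈ Pset T (V ++ [d]) ↔ i < T.length ∧ V ++ [d] <+: rot T i := by
    intro d i
    rw [mem_Pset]
    constructor
    · rintro ⟨h1, h2⟩
      exact ⟨h1, (circOcc_iff_prefix h1 (by simp; omega)).mp h2⟩
    · rintro ⟨h1, h2⟩
      exact ⟨h1, (circOcc_iff_prefix h1 (by simp; omega)).mpr h2⟩
  have hsplit : (Finset.range T.length).filter (fun i => lexLt (rot T i) (V ++ [c]) = true)
      = ((Finset.range T.length).filter (fun i => lexLt (rot T i) V = true))
        ∪ (Finset.range c).biUnion (fun d => Pset T (V ++ [d])) := by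
    ext i
    simp only [Finset.mem_filter, Finset.mem_range, Finset.mem_union, Finset.mem_biUnion]
    constructor
    · rintro ⟨hi, hlex⟩
      rcases (lexLt_snoc_iff c (by rw [rot_length]; omega)).mp hlex with h1 | ⟨d, hd, hpre⟩
      · exact Or.inl ⟨hi, h1⟩
      · exact Or.inr ⟨d, hd, (hPset d i).mpr ⟨hi, hpre⟩⟩
    · rintro (⟨hi, h1⟩ | ⟨d, hd, hmem⟩)
      · exact ⟨hi, (lexLt_snoc_iff c (by rw [rot_length]; omega)).mpr (Or.inl h1)⟩
      · obtain ⟨hi, hpre⟩ := (hPset d i).mp hmem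
        exact ⟨hi, (lexLt_snoc_iff c (by rw [rot_length]; omega)).mpr
          (Or.inr ⟨d, hd, hpre⟩)⟩
  rw [hsplit, Finset.card_union_of_disjoint, Finset.card_biUnion]
  · intro d1 h1 d2 h2 hne
    rw [Function.onFun, Finset.disjoint_left]
    intro i hi1 hi2
    obtain ⟨_, hp1⟩ := (hPset d1 i).mp hi1
    obtain ⟨_, hp2⟩ := (hPset d2 i).mp hi2
    exact hne (by rw [← snoc_prefix_getD hp1, ← snoc_prefix_getD hp2])
  · rw [Finset.disjoint_left]
    intro i hi1 hi2
    rw [Finset.mem_filter] at hi1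
    rw [Finset.mem_biUnion] at hi2
    obtain ⟨d, _, hmem⟩ := hi2
    obtain ⟨_, hpre⟩ := (hPset d i).mp hmem
    have : lexLt (rot T i) V = false :=
      lexLt_of_prefix ((List.prefix_append V [d]).trans hpre)
    rw [this] at hi1
    simp at hi1

end Lemmas5
section Lemmas6

lemma rot_inj {σ : ℕ} {T : List ℕ} (hT : Wellformed σ T) {p q : ℕ} (hp : p < T.length)
    (hq : q < T.length) (h : rot T p = rot T q) : p = q := by
  obtain ⟨S, rfl, hS⟩ := hT
  set T := S ++ [0] with hTdef
  have hlen : T.length = S.length + 1 := by simp [hTdef]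
  by_contra hne
  have h1 : (rot T p).getD (T.length - 1 - p) 0 = (rot T q).getD (T.length - 1 - p) 0 := by
    rw [h]
  rw [rot_getD _ _ _ hp (by omega), rot_getD _ _ _ hq (by omega)] at h1
  have e1 : (p + (T.length - 1 - p)) % T.length = T.length - 1 := by
    rw [show p + (T.length - 1 - p) = T.length - 1 by omega, Nat.mod_eq_of_lt (by omega)]
  have hz : T.getD (T.length - 1) 0 = 0 := by
    rw [hTdef, List.getD_append_right _ _ _ _ (by simp)]
    simp [hlen]
  have hr : (q + (T.length - 1 - p)) % T.length < T.length - 1 := by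
    by_cases hpq : q < p
    · rw [Nat.mod_eq_of_lt (by omega)]; omega
    · rw [show q + (T.length - 1 - p) = T.length + (q - p - 1) by omega,
        Nat.add_mod_left, Nat.mod_eq_of_lt (by omega)]
      omega
  rw [e1, hz] at h1
  set r := (q + (T.length - 1 - p)) % T.length with hrdef
  have h2 : T.getD r 0 = S.getD r 0 := List.getD_append _ _ _ _ (by omega)
  have hmem : S.getD r 0 ∈ S := by
    rw [List.getD_eq_getElem?_getD, List.getElem?_eq_getElem (show r < S.length by omega)]
    exact List.getElem_mem _
  have := (hS _ hmem).1
  omega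

lemma Wlen_lt {σ : ℕ} {T W : List ℕ} (hT : Wellformed σ T) (hW : W ∈ MaxRepeats T) :
    W.length < T.length := by
  rw [MaxRepeats, Finset.mem_filter] at hW
  obtain ⟨hcs, _, hrep, _⟩ := hW
  have hle : W.length ≤ T.length := by
    rw [circSubstrings, Finset.mem_image] at hcs
    obtain ⟨⟨p1, p2⟩, _, rfl⟩ := hcs
    simp [rot_length]
  rcases lt_or_eq_of_le hle with h | h
  · exact h
  · exfalso
    obtain ⟨p, hp, q, hq, hne⟩ := Finset.one_lt_card.mp hrep
    rw [mem_Pset] at hp hq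
    have hp' := (circOcc_iff_prefix hp.1 (le_of_eq h)).mp hp.2
    have hq' := (circOcc_iff_prefix hq.1 (le_of_eq h)).mp hq.2
    have ep : W = rot T p := hp'.eq_of_length (by rw [rot_length, h])
    have eq' : W = rot T q := hq'.eq_of_length (by rw [rot_length, h])
    exact hne (rot_inj hT hp.1 hq.1 (ep ▸ eq'))

end Lemmas6

/-- Let `W ∈ [1..σ]^m` be a maximal repeat of `T` and let `k ∈ [1..m]`
be such that `W[i..m]` is not left-maximal for every `i ∈ [2..k]`.  Then for every
character `c ∈ [0..σ]` and every `i ∈ [1..k]`,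
`N_T(W[i..m]c) − N_T(W[i..m]) = N_T(Wc) − N_T(W)`, where `N_T(X)` is the number of
rotations of `T` lexicographically smaller than `X`. -/
theorem child_interval_offsets (σ : ℕ) (T : List ℕ) (hT : Wellformed σ T)
    (W : List ℕ) (k : ℕ) (hW : W ∈ MaxRepeats T) (hk1 : 1 ≤ k) (hk2 : k ≤ W.length)
    (hnl : ∀ i, 2 ≤ i → i ≤ k → ¬ LeftMaximal T (W.drop (i - 1)))
    (c : ℕ) (hc : c ≤ σ) :
    ∀ i, 1 ≤ i → i ≤ k →
      (Nrank T (W.drop (i - 1) ++ [c]) : ℤ) - (Nrank T (W.drop (i - 1)) : ℤ)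
        = (Nrank T (W ++ [c]) : ℤ) - (Nrank T W : ℤ) := by
  have hTne : T ≠ [] := by obtain ⟨S, rfl, -⟩ := hT; simp
  have hn : 0 < T.length := List.length_pos_iff.mpr hTne
  have hWlen : W.length < T.length := Wlen_lt hT hW
  have hrep : 1 < (Pset T W).card := ((Finset.mem_filter.mp hW).2).2.1
  have hWocc : OccursCirc T W := Finset.card_pos.mp (by omega)
  have hdropocc : ∀ m, OccursCirc T (W.drop m) := by
    intro m
    obtain ⟨p, hp⟩ := hWocc
    rw [mem_Pset] at hp
    exact ⟨(p + m) % T.length, mem_Pset.mpr ⟨Nat.mod_lt _ hn, circOcc_drop hTne hp.2⟩⟩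
  have key : ∀ i, 1 ≤ i → i ≤ k →
      ∀ d, (Pset T (W.drop (i - 1) ++ [d])).card = (Pset T (W ++ [d])).card := by
    refine fun i hi1 => Nat.le_induction ?_ ?_ i hi1
    · intro _ d; simp
    · intro i hi1 IH hik d
      have hiW : i - 1 < W.length := by omega
      have hcons : W.drop (i - 1) = W.getD (i - 1) 0 :: W.drop i := by
        rw [List.drop_eq_getElem_cons hiW, show i - 1 + 1 = i by omega]
        congr 1
        rw [List.getD_eq_getElem?_getD, List.getElem?_eq_getElem hiW]
        rfl
      have hnl' : ¬ LeftMaximal T (W.drop i) := by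
        have := hnl (i + 1) (by omega) hik
        simpa using this
      have hocc' : OccursCirc T (W.getD (i - 1) 0 :: W.drop i) := by
        rw [← hcons]; exact hdropocc (i - 1)
      have hstep := step_card (d := d) hTne hnl' hocc'
      have hgoal : W.drop (i + 1 - 1) = W.drop i := by simp
      rw [hgoal]
      calc (Pset T (W.drop i ++ [d])).card
          = (Pset T (W.getD (i - 1) 0 :: (W.drop i ++ [d]))).card := hstep.symm
        _ = (Pset T (W.drop (i - 1) ++ [d])).card := by rw [hcons, List.cons_append]
        _ = (Pset T (W ++ [d])).card := IH (by omega) d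
  intro i hi1 hi2
  have hlen_i : (W.drop (i - 1)).length < T.length := by rw [List.length_drop]; omega
  rw [Nrank_snoc c hlen_i, Nrank_snoc c hWlen]
  rw [Finset.sum_congr rfl (fun d _ => key i hi1 hi2 d)]
  push_cast
  ring
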